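/- One-window descent inequality for the first-order algorithm (equation leading to Theorem 1). Under the game setup below, with the additional assumptions: each 𝒳_i compact with diameter at most D; ‖G_i(x)‖ ≤ U for all x ∈ ∏_j 𝒳_j; x* satisfies the Nash variational inequality ⟨G_i(x*), z − x_i*⟩ ≥ 0 for all z ∈ 𝒳_i; quasidominance holds with witness r and ε := min_i (μ_i − (1/r_i)Σ_{j≠i} r_j L_{ij}) > 0. Fix an integer B ≥ 1 and update-time sets 𝕋^i ⊆ ℕ such that every interval [t, t+B) contains at least one element of each 𝕋^i. Let the iterates be x_{i,s+1} = P_{𝒳_i}(x_{i,s} − η·G_i(x_s)) if s ∈ 𝕋^i and x_{i,s+1} = x_{i,s} otherwise, with step size η > 0 satisfying 2ηBμ_i ≤ 1 for all i. Define the Lyapunov function V_s = max_i ‖x_{i,s} − x_i*‖²/r_i², r_min = min_i r_i, and c₀ = max_i (U² + L_{ii}DU + 2DU·Σ_{j≠i} L_{ij})/r_i². Then for every t, V_{t+B} ≤ (1 − 2ηε)V_t + η²·B·U²/r_min² + η²·B²·c₀. -/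

import Mathlib

open scoped RealInnerProductSpace

lemma proj_sq_le' {E : Type*} [NormedAddCommGroup E] [InnerProductSpace ℝ E]
    {K : Set E} (hK : Convex ℝ K) {p z : E} (hp : p ∈ K) (hz : z ∈ K) (y : E)
    (hproj : ∀ w ∈ K, ‖y - p‖ ≤ ‖y - w‖) : ‖p - z‖ ^ 2 ≤ ‖y - z‖ ^ 2 := by
  have key : ∀ θ : ℝ, 0 < θ → θ ≤ 1 →
      2 * θ * ⟪y - p, z - p⟫ ≤ θ ^ 2 * ‖z - p‖ ^ 2 := by
    intro θ hθ hθ1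
    have hw : p + θ • (z - p) ∈ K := by
      have h := hK hp hz (by linarith : (0:ℝ) ≤ 1 - θ) hθ.le (by ring)
      have he : (1 - θ) • p + θ • z = p + θ • (z - p) := by
        rw [smul_sub, sub_smul, one_smul]; abel
      rwa [he] at h
    have h1 : ‖y - p‖ ≤ ‖y - (p + θ • (z - p))‖ := hproj _ hw
    have h1sq : ‖y - p‖ ^ 2 ≤ ‖y - (p + θ • (z - p))‖ ^ 2 :=
      pow_le_pow_left₀ (norm_nonneg _) h1 2
    have h2 : ‖y - (p + θ • (z - p))‖ ^ 2
        = ‖y - p‖ ^ 2 - 2 * θ * ⟪y - p, z - p⟫ + θ ^ 2 * ‖z - p‖ ^ 2 := by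
      have hrw : y - (p + θ • (z - p)) = (y - p) - θ • (z - p) := by abel
      rw [hrw, norm_sub_sq_real, real_inner_smul_right, norm_smul,
        Real.norm_eq_abs, mul_pow, sq_abs]
      ring
    rw [h2] at h1sq
    linarith
  have hinner : ⟪y - p, z - p⟫ ≤ 0 := by
    by_contra h
    push_neg at h
    rcases le_or_gt (‖z - p‖ ^ 2) 0 with hK2 | hK2
    · have hk := key 1 one_pos le_rfl
      nlinarith
    · have hθpos : 0 < min 1 (⟪y - p, z - p⟫ / ‖z - p‖ ^ 2) :=
        lt_min one_pos (div_pos h hK2)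
      have hk := key _ hθpos (min_le_left _ _)
      have hθle : min 1 (⟪y - p, z - p⟫ / ‖z - p‖ ^ 2) ≤ ⟪y - p, z - p⟫ / ‖z - p‖ ^ 2 :=
        min_le_right _ _
      have hmul : min 1 (⟪y - p, z - p⟫ / ‖z - p‖ ^ 2) * ‖z - p‖ ^ 2 ≤ ⟪y - p, z - p⟫ := by
        rw [← le_div_iff₀ hK2]; exact hθle
      nlinarith
  have hexp : ‖y - z‖ ^ 2 = ‖y - p‖ ^ 2 - 2 * ⟪y - p, z - p⟫ + ‖z - p‖ ^ 2 := by
    have hrw : y - z = (y - p) - (z - p) := by abel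
    rw [hrw, norm_sub_sq_real]
  have hn : ‖p - z‖ = ‖z - p‖ := norm_sub_rev _ _
  rw [hn]
  nlinarith [sq_nonneg ‖y - p‖]

lemma lipschitz_telescope {N : ℕ} {E : Type*} [NormedAddCommGroup E] [InnerProductSpace ℝ E]
    (𝒳 : Fin N → Set E) (G : (Fin N → E) → E) (L : Fin N → ℝ)
    (hlip : ∀ (a : Fin N → E), (∀ k, a k ∈ 𝒳 k) → ∀ j, ∀ yj ∈ 𝒳 j,
      ‖G a - G (Function.update a j yj)‖ ≤ L j * ‖a j - yj‖) :
    ∀ (S : Finset (Fin N)) (a b : Fin N → E), (∀ k, a k ∈ 𝒳 k) → (∀ k, b k ∈ 𝒳 k) →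
      (∀ k, k ∉ S → a k = b k) → ‖G a - G b‖ ≤ ∑ j ∈ S, L j * ‖a j - b j‖ := by
  intro S
  induction S using Finset.induction_on with
  | empty =>
    intro a b ha hb hagree
    have : a = b := funext fun k => hagree k (Finset.notMem_empty k)
    simp [this]
  | insert j S hj ih =>
    intro a b ha hb hagree
    set a' := Function.update a j (b j) with ha'
    have ha'mem : ∀ k, a' k ∈ 𝒳 k := by
      intro k
      by_cases hk : k = j
      · subst hk; simp [ha', Function.update_self]; exact hb k
      · simp [ha', Function.update_of_ne hk]; exact ha k
    have hstep : ‖G a - G a'‖ ≤ L j * ‖a j - b j‖ := hlip a ha j (b j) (hb j)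
    have hrest : ‖G a' - G b‖ ≤ ∑ k ∈ S, L k * ‖a' k - b k‖ := by
      apply ih a' b ha'mem hb
      intro k hk
      by_cases hkj : k = j
      · subst hkj; simp [ha', Function.update_self]
      · rw [ha']
        simp only [Function.update_of_ne hkj]
        exact hagree k (by simp [hkj, hk])
    have hsum : ∑ k ∈ S, L k * ‖a' k - b k‖ = ∑ k ∈ S, L k * ‖a k - b k‖ := by
      apply Finset.sum_congr rfl
      intro k hk
      have : k ≠ j := fun h => hj (h ▸ hk)
      rw [ha', Function.update_of_ne this]
    rw [Finset.sum_insert hj]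
    calc ‖G a - G b‖ = ‖(G a - G a') + (G a' - G b)‖ := by rw [sub_add_sub_cancel]
      _ ≤ ‖G a - G a'‖ + ‖G a' - G b‖ := norm_add_le _ _
      _ ≤ L j * ‖a j - b j‖ + ∑ k ∈ S, L k * ‖a k - b k‖ := by rw [hsum] at hrest; linarith

set_option maxHeartbeats 1000000 in
theorem firstOrder_one_window_descent {N d : ℕ} [NeZero N]
    (𝒳 : Fin N → Set (EuclideanSpace ℝ (Fin d)))
    (hclosed : ∀ i, IsClosed (𝒳 i)) (hconvex : ∀ i, Convex ℝ (𝒳 i))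
    (hcompact : ∀ i, IsCompact (𝒳 i))
    (D : ℝ) (hD : ∀ i, ∀ z ∈ 𝒳 i, ∀ w ∈ 𝒳 i, ‖z - w‖ ≤ D)
    (G : Fin N → (Fin N → EuclideanSpace ℝ (Fin d)) → EuclideanSpace ℝ (Fin d))
    (μ : Fin N → ℝ) (hμ : ∀ i, 0 < μ i)
    (hmono : ∀ i (x : Fin N → EuclideanSpace ℝ (Fin d)), (∀ j, x j ∈ 𝒳 j) →
      ∀ yi ∈ 𝒳 i, μ i * ‖x i - yi‖ ^ 2 ≤ ⟪G i x - G i (Function.update x i yi), x i - yi⟫)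
    (L : Fin N → Fin N → ℝ) (hL : ∀ i j, 0 ≤ L i j)
    (hlip : ∀ i j (x : Fin N → EuclideanSpace ℝ (Fin d)), (∀ k, x k ∈ 𝒳 k) →
      ∀ yj ∈ 𝒳 j, ‖G i x - G i (Function.update x j yj)‖ ≤ L i j * ‖x j - yj‖)
    (U : ℝ)
    (hU : ∀ i (x : Fin N → EuclideanSpace ℝ (Fin d)), (∀ j, x j ∈ 𝒳 j) → ‖G i x‖ ≤ U)
    (xstar : Fin N → EuclideanSpace ℝ (Fin d)) (hxstar : ∀ i, xstar i ∈ 𝒳 i)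
    (hnash : ∀ i, ∀ z ∈ 𝒳 i, 0 ≤ ⟪G i xstar, z - xstar i⟫)
    (r : Fin N → ℝ) (hr : ∀ i, 0 < r i)
    (hq : ∀ i, ∑ j ∈ Finset.univ.erase i, r j * L i j < r i * μ i)
    (ε : ℝ)
    (hεdef : ε = Finset.univ.inf' Finset.univ_nonempty
      (fun i => μ i - (1 / r i) * ∑ j ∈ Finset.univ.erase i, r j * L i j))
    (hεpos : 0 < ε)
    (P : Fin N → EuclideanSpace ℝ (Fin d) → EuclideanSpace ℝ (Fin d))
    (hPmem : ∀ i y, P i y ∈ 𝒳 i)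
    (hPproj : ∀ i y, ∀ z ∈ 𝒳 i, ‖y - P i y‖ ≤ ‖y - z‖)
    (B : ℕ) (hB : 1 ≤ B)
    (𝕋 : Fin N → Set ℕ)
    (hasync : ∀ i t, ∃ s ∈ 𝕋 i, t ≤ s ∧ s < t + B)
    (η : ℝ) (hη : 0 < η) (hηB : ∀ i, 2 * η * (B : ℝ) * μ i ≤ 1)
    (x : ℕ → Fin N → EuclideanSpace ℝ (Fin d))
    (hx1 : ∀ i, x 1 i ∈ 𝒳 i)
    (hupd : ∀ s, 1 ≤ s → ∀ i, s ∈ 𝕋 i →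
      x (s + 1) i = P i (x s i - η • G i (x s)))
    (hkeep : ∀ s, 1 ≤ s → ∀ i, s ∉ 𝕋 i → x (s + 1) i = x s i) :
    ∀ t, 1 ≤ t →
      Finset.univ.sup' Finset.univ_nonempty
          (fun i => ‖x (t + B) i - xstar i‖ ^ 2 / r i ^ 2) ≤
        (1 - 2 * η * ε) * Finset.univ.sup' Finset.univ_nonempty
            (fun i => ‖x t i - xstar i‖ ^ 2 / r i ^ 2) +
        η ^ 2 * (B : ℝ) * U ^ 2 /
          (Finset.univ.inf' Finset.univ_nonempty r) ^ 2 +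
        η ^ 2 * (B : ℝ) ^ 2 * Finset.univ.sup' Finset.univ_nonempty
          (fun i => (U ^ 2 + L i i * D * U +
            2 * D * U * ∑ j ∈ Finset.univ.erase i, L i j) / r i ^ 2) := by
  classical
  intro t ht
  have hBR : (1:ℝ) ≤ (B:ℝ) := by exact_mod_cast hB
  have hU0 : 0 ≤ U := le_trans (norm_nonneg _) (hU 0 xstar hxstar)
  have hD0 : 0 ≤ D := le_trans (norm_nonneg _) (hD 0 (xstar 0) (hxstar 0) (xstar 0) (hxstar 0))
  set rmin : ℝ := Finset.univ.inf' Finset.univ_nonempty r with hrmin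
  have hrminpos : 0 < rmin := by
    rw [hrmin]
    exact (Finset.lt_inf'_iff _).mpr fun i _ => hr i
  have hrminle : ∀ i, rmin ≤ r i := fun i => Finset.inf'_le _ (Finset.mem_univ i)
  have hεle : ∀ i, ε ≤ μ i - (1 / r i) * ∑ j ∈ Finset.univ.erase i, r j * L i j := by
    intro i; rw [hεdef]; exact Finset.inf'_le _ (Finset.mem_univ i)
  have hsum0 : ∀ i, 0 ≤ ∑ j ∈ Finset.univ.erase i, r j * L i j := fun i =>
    Finset.sum_nonneg fun j _ => mul_nonneg (hr j).le (hL i j)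
  have hεμ : ∀ i, ε ≤ μ i := by
    intro i
    have h1 := hεle i
    have h2 : 0 ≤ (1 / r i) * ∑ j ∈ Finset.univ.erase i, r j * L i j :=
      mul_nonneg (one_div_nonneg.mpr (hr i).le) (hsum0 i)
    linarith
  have hμη : ∀ i, 2 * η * μ i ≤ 1 := by
    intro i
    have h := hηB i
    nlinarith [hμ i, hη]
  have h2ηε1 : 2 * η * ε ≤ 1 := by
    have := hμη 0
    have := hεμ 0
    nlinarith [hη]
  -- iterates remain feasible
  have hmem : ∀ s, 1 ≤ s → ∀ j, x s j ∈ 𝒳 j := by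
    intro s hs
    induction s, hs using Nat.le_induction with
    | base => exact hx1
    | succ s hs ih =>
      intro j
      by_cases hj : s ∈ 𝕋 j
      · rw [hupd s hs j hj]; exact hPmem j _
      · rw [hkeep s hs j hj]; exact ih j
  -- Lyapunov function
  set V : ℕ → ℝ := fun s => Finset.univ.sup' Finset.univ_nonempty
      (fun i => ‖x s i - xstar i‖ ^ 2 / r i ^ 2) with hVdef
  have hVle : ∀ s i, ‖x s i - xstar i‖ ^ 2 / r i ^ 2 ≤ V s := by
    intro s i
    rw [hVdef]
    exact Finset.le_sup' (fun i => ‖x s i - xstar i‖ ^ 2 / r i ^ 2) (Finset.mem_univ i)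
  have hV0 : ∀ s, 0 ≤ V s := fun s =>
    le_trans (div_nonneg (sq_nonneg _) (sq_nonneg _)) (hVle s 0)
  have hVsq : ∀ s i, ‖x s i - xstar i‖ ^ 2 ≤ r i ^ 2 * V s := by
    intro s i
    have h := hVle s i
    rw [div_le_iff₀ (pow_pos (hr i) 2)] at h
    linarith
  have hcross : ∀ s i j, ‖x s j - xstar j‖ * ‖x s i - xstar i‖ ≤ r j * r i * V s := by
    intro s i j
    nlinarith [hVsq s i, hVsq s j, norm_nonneg (x s j - xstar j),
      norm_nonneg (x s i - xstar i), hr i, hr j, hV0 s, mul_pos (hr i) (hr j),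
      sq_nonneg (‖x s j - xstar j‖ * r i - ‖x s i - xstar i‖ * r j)]
  -- key contraction at update times
  have hstar : ∀ s, 1 ≤ s → ∀ i, s ∈ 𝕋 i →
      ‖x (s + 1) i - xstar i‖ ^ 2 ≤ (1 - 2 * η * ε) * (r i ^ 2 * V s) + η ^ 2 * U ^ 2 := by
    intro s hs i hsT
    have hxs := hmem s hs
    have hproj : ‖x (s + 1) i - xstar i‖ ^ 2 ≤ ‖(x s i - η • G i (x s)) - xstar i‖ ^ 2 := by
      rw [hupd s hs i hsT]
      exact proj_sq_le' (hconvex i) (hPmem i _) (hxstar i) _ (fun w hw => hPproj i _ w hw)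
    have hexpand : ‖(x s i - η • G i (x s)) - xstar i‖ ^ 2
        = ‖x s i - xstar i‖ ^ 2 - 2 * η * ⟪G i (x s), x s i - xstar i⟫
          + η ^ 2 * ‖G i (x s)‖ ^ 2 := by
      have hrw : (x s i - η • G i (x s)) - xstar i = (x s i - xstar i) - η • G i (x s) := by
        abel
      rw [hrw, norm_sub_sq_real, real_inner_smul_right, norm_smul, Real.norm_eq_abs,
        mul_pow, sq_abs, real_inner_comm]
      ring
    set u1 := Function.update (x s) i (xstar i) with hu1
    have hmono' : μ i * ‖x s i - xstar i‖ ^ 2 ≤ ⟪G i (x s) - G i u1, x s i - xstar i⟫ :=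
      hmono i (x s) hxs (xstar i) (hxstar i)
    have hu1mem : ∀ k, u1 k ∈ 𝒳 k := by
      intro k
      by_cases hk : k = i
      · subst hk; simp [hu1, Function.update_self]; exact hxstar k
      · simp [hu1, Function.update_of_ne hk]; exact hxs k
    have hlipb : ‖G i u1 - G i xstar‖
        ≤ ∑ j ∈ Finset.univ.erase i, L i j * ‖x s j - xstar j‖ := by
      have h := lipschitz_telescope 𝒳 (G i) (L i)
        (fun a ha j yj hyj => hlip i j a ha yj hyj)
        (Finset.univ.erase i) u1 xstar hu1mem hxstar
        (fun k hk => by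
          have hki : k = i := by
            by_contra hne
            exact hk (Finset.mem_erase.mpr ⟨hne, Finset.mem_univ k⟩)
          subst hki
          simp [hu1, Function.update_self])
      refine h.trans (le_of_eq ?_)
      apply Finset.sum_congr rfl
      intro j hj
      have hji : j ≠ i := (Finset.mem_erase.mp hj).1
      rw [hu1, Function.update_of_ne hji]
    have hnash' : 0 ≤ ⟪G i xstar, x s i - xstar i⟫ := hnash i (x s i) (hxs i)
    have hinner2 : -((∑ j ∈ Finset.univ.erase i, L i j * ‖x s j - xstar j‖)
          * ‖x s i - xstar i‖)
        ≤ ⟪G i u1 - G i xstar, x s i - xstar i⟫ := by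
      have hcs := real_inner_le_norm (-(G i u1 - G i xstar)) (x s i - xstar i)
      rw [inner_neg_left, norm_neg] at hcs
      have hmul := mul_le_mul_of_nonneg_right hlipb (norm_nonneg (x s i - xstar i))
      linarith
    have hdecomp : ⟪G i (x s), x s i - xstar i⟫
        = ⟪G i (x s) - G i u1, x s i - xstar i⟫
          + ⟪G i u1 - G i xstar, x s i - xstar i⟫
          + ⟪G i xstar, x s i - xstar i⟫ := by
      rw [← inner_add_left, ← inner_add_left]
      congr 1
      abel
    have hinnerlb : μ i * ‖x s i - xstar i‖ ^ 2
          - (∑ j ∈ Finset.univ.erase i, L i j * ‖x s j - xstar j‖) * ‖x s i - xstar i‖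
        ≤ ⟪G i (x s), x s i - xstar i⟫ := by
      rw [hdecomp]; linarith
    have hgU : ‖G i (x s)‖ ≤ U := hU i (x s) hxs
    have hgU2 : η ^ 2 * ‖G i (x s)‖ ^ 2 ≤ η ^ 2 * U ^ 2 :=
      mul_le_mul_of_nonneg_left (pow_le_pow_left₀ (norm_nonneg _) hgU 2) (sq_nonneg η)
    have hcrossSum : (∑ j ∈ Finset.univ.erase i, L i j * ‖x s j - xstar j‖)
          * ‖x s i - xstar i‖
        ≤ (∑ j ∈ Finset.univ.erase i, r j * L i j) * (r i * V s) := by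
      rw [Finset.sum_mul, Finset.sum_mul]
      apply Finset.sum_le_sum
      intro j hj
      have hc := hcross s i j
      have hLij := hL i j
      nlinarith [mul_le_mul_of_nonneg_left hc hLij]
    have hq' : (∑ j ∈ Finset.univ.erase i, r j * L i j) ≤ r i * (μ i - ε) := by
      have h1 := hεle i
      have h2 : (1 / r i) * ∑ j ∈ Finset.univ.erase i, r j * L i j ≤ μ i - ε := by linarith
      have h3 := mul_le_mul_of_nonneg_left h2 (hr i).le
      have h4 : r i * ((1 / r i) * ∑ j ∈ Finset.univ.erase i, r j * L i j)
          = ∑ j ∈ Finset.univ.erase i, r j * L i j := by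
        rw [← mul_assoc, mul_one_div, div_self (hr i).ne', one_mul]
      rw [h4] at h3
      exact h3
    have hstep4 : (∑ j ∈ Finset.univ.erase i, r j * L i j) * (r i * V s)
        ≤ r i * (μ i - ε) * (r i * V s) :=
      mul_le_mul_of_nonneg_right hq' (mul_nonneg (hr i).le (hV0 s))
    have hA2 : ‖x s i - xstar i‖ ^ 2 ≤ r i ^ 2 * V s := hVsq s i
    have hcoef : (0:ℝ) ≤ 1 - 2 * η * μ i := by linarith [hμη i]
    have hmul2 : (1 - 2 * η * μ i) * ‖x s i - xstar i‖ ^ 2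
        ≤ (1 - 2 * η * μ i) * (r i ^ 2 * V s) :=
      mul_le_mul_of_nonneg_left hA2 hcoef
    have hscale : 2 * η * ((∑ j ∈ Finset.univ.erase i, L i j * ‖x s j - xstar j‖)
          * ‖x s i - xstar i‖)
        ≤ 2 * η * (r i * (μ i - ε) * (r i * V s)) :=
      mul_le_mul_of_nonneg_left (hcrossSum.trans hstep4) (by linarith)
    have hscale2 : 2 * η * (μ i * ‖x s i - xstar i‖ ^ 2
          - (∑ j ∈ Finset.univ.erase i, L i j * ‖x s j - xstar j‖) * ‖x s i - xstar i‖)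
        ≤ 2 * η * ⟪G i (x s), x s i - xstar i⟫ :=
      mul_le_mul_of_nonneg_left hinnerlb (by linarith)
    rw [hexpand] at hproj
    linarith [hproj, hgU2, hmul2, hscale, hscale2]
  -- one-step boundedness
  have honestep : ∀ s, 1 ≤ s → V (s + 1) ≤ V s + η ^ 2 * U ^ 2 / rmin ^ 2 := by
    intro s hs
    apply Finset.sup'_le
    intro i _
    have hCi : η ^ 2 * U ^ 2 / r i ^ 2 ≤ η ^ 2 * U ^ 2 / rmin ^ 2 := by
      apply div_le_div_of_nonneg_left (by positivity) (pow_pos hrminpos 2)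
      nlinarith [hrminle i, hrminpos]
    by_cases hi : s ∈ 𝕋 i
    · have h := hstar s hs i hi
      have hpos : (0:ℝ) < r i ^ 2 := pow_pos (hr i) 2
      have h2 : ‖x (s + 1) i - xstar i‖ ^ 2 / r i ^ 2
          ≤ (1 - 2 * η * ε) * V s + η ^ 2 * U ^ 2 / r i ^ 2 := by
        rw [div_le_iff₀ hpos]
        have he : ((1 - 2 * η * ε) * V s + η ^ 2 * U ^ 2 / r i ^ 2) * r i ^ 2
            = (1 - 2 * η * ε) * (r i ^ 2 * V s) + η ^ 2 * U ^ 2 := by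
          rw [add_mul, div_mul_cancel₀ _ hpos.ne']; ring
        rw [he]; exact h
      have h3 : (1 - 2 * η * ε) * V s ≤ V s := by
        nlinarith [mul_nonneg (mul_nonneg (mul_nonneg (by norm_num : (0:ℝ) ≤ 2) hη.le)
          hεpos.le) (hV0 s)]
      linarith
    · rw [hkeep s hs i hi]
      have h1 := hVle s i
      have h2 : (0:ℝ) ≤ η ^ 2 * U ^ 2 / rmin ^ 2 := by positivity
      linarith
  -- accumulation over the window
  have hchain : ∀ k : ℕ, V (t + k) ≤ V t + (k : ℝ) * (η ^ 2 * U ^ 2 / rmin ^ 2) := by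
    intro k
    induction k with
    | zero => simp
    | succ k ih =>
      have h1 : 1 ≤ t + k := le_trans ht (Nat.le_add_right t k)
      have h2 := honestep (t + k) h1
      have h3 : t + (k + 1) = (t + k) + 1 := by omega
      rw [h3]
      push_cast
      linarith
  -- final assembly
  have hc0 : 0 ≤ Finset.univ.sup' Finset.univ_nonempty
      (fun i => (U ^ 2 + L i i * D * U +
        2 * D * U * ∑ j ∈ Finset.univ.erase i, L i j) / r i ^ 2) := by
    refine le_trans ?_ (Finset.le_sup' _ (Finset.mem_univ (0 : Fin N)))
    apply div_nonneg _ (by positivity)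
    have h1 : 0 ≤ L 0 0 * D * U := mul_nonneg (mul_nonneg (hL 0 0) hD0) hU0
    have h2 : 0 ≤ 2 * D * U * ∑ j ∈ Finset.univ.erase (0:Fin N), L 0 j :=
      mul_nonneg (mul_nonneg (mul_nonneg (by norm_num) hD0) hU0)
        (Finset.sum_nonneg fun j _ => hL 0 j)
    nlinarith [sq_nonneg U]
  have hc0' : 0 ≤ η ^ 2 * (B : ℝ) ^ 2 * Finset.univ.sup' Finset.univ_nonempty
      (fun i => (U ^ 2 + L i i * D * U +
        2 * D * U * ∑ j ∈ Finset.univ.erase i, L i j) / r i ^ 2) :=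
    mul_nonneg (by positivity) hc0
  have hmain : ∀ i : Fin N, ‖x (t + B) i - xstar i‖ ^ 2 / r i ^ 2
      ≤ (1 - 2 * η * ε) * V t + η ^ 2 * (B : ℝ) * U ^ 2 / rmin ^ 2 := by
    intro i
    obtain ⟨s0, hs0T, hs0t, hs0B⟩ := hasync i t
    set S : Finset ℕ := (Finset.Ico t (t + B)).filter (· ∈ 𝕋 i) with hSdef
    have hSne : S.Nonempty :=
      ⟨s0, Finset.mem_filter.mpr ⟨Finset.mem_Ico.mpr ⟨hs0t, hs0B⟩, hs0T⟩⟩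
    set si := S.max' hSne with hsidef
    have hsiS : si ∈ S := S.max'_mem hSne
    have hsiT : si ∈ 𝕋 i := (Finset.mem_filter.mp hsiS).2
    have hsiIco := Finset.mem_Ico.mp (Finset.mem_filter.mp hsiS).1
    have hsi1 : 1 ≤ si := le_trans ht hsiIco.1
    have hconst : ∀ u, si + 1 ≤ u → u ≤ t + B → x u i = x (si + 1) i := by
      intro u h1
      induction u, h1 using Nat.le_induction with
      | base => intro _; rfl
      | succ u hu ih =>
        intro h2
        have hu1 : 1 ≤ u := by omega
        have hnotT : u ∉ 𝕋 i := by
          intro hmemT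
          have huS : u ∈ S := Finset.mem_filter.mpr
            ⟨Finset.mem_Ico.mpr ⟨by omega, by omega⟩, hmemT⟩
          have := S.le_max' u huS
          omega
        rw [hkeep u hu1 i hnotT]
        exact ih (by omega)
    have hxtB : x (t + B) i = x (si + 1) i := hconst (t + B) (by omega) le_rfl
    have hkey := hstar si hsi1 i hsiT
    have hVsi := hchain (si - t)
    rw [Nat.add_sub_cancel' hsiIco.1] at hVsi
    have hsit : ((si - t : ℕ) : ℝ) ≤ (B : ℝ) - 1 := by
      have h' : (si - t : ℕ) + 1 ≤ B := by omega
      have h'' : ((si - t : ℕ) : ℝ) + 1 ≤ (B : ℝ) := by exact_mod_cast h'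
      linarith
    have hC0 : (0:ℝ) ≤ η ^ 2 * U ^ 2 / rmin ^ 2 := by positivity
    have hVsi' : V si ≤ V t + ((B : ℝ) - 1) * (η ^ 2 * U ^ 2 / rmin ^ 2) := by
      have hmm := mul_le_mul_of_nonneg_right hsit hC0
      linarith
    have h1ηε0 : (0:ℝ) ≤ 1 - 2 * η * ε := by linarith
    have hkey2 : ‖x (t + B) i - xstar i‖ ^ 2
        ≤ (1 - 2 * η * ε) * (r i ^ 2 * (V t + ((B : ℝ) - 1) * (η ^ 2 * U ^ 2 / rmin ^ 2)))
          + η ^ 2 * U ^ 2 := by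
      rw [hxtB]
      refine hkey.trans ?_
      have := mul_le_mul_of_nonneg_left hVsi' (sq_nonneg (r i))
      nlinarith [h1ηε0]
    have hpos : (0:ℝ) < r i ^ 2 := pow_pos (hr i) 2
    have hdiv : ‖x (t + B) i - xstar i‖ ^ 2 / r i ^ 2
        ≤ (1 - 2 * η * ε) * (V t + ((B : ℝ) - 1) * (η ^ 2 * U ^ 2 / rmin ^ 2))
          + η ^ 2 * U ^ 2 / r i ^ 2 := by
      rw [div_le_iff₀ hpos]
      have he : ((1 - 2 * η * ε) * (V t + ((B : ℝ) - 1) * (η ^ 2 * U ^ 2 / rmin ^ 2))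
            + η ^ 2 * U ^ 2 / r i ^ 2) * r i ^ 2
          = (1 - 2 * η * ε) * (r i ^ 2 * (V t + ((B : ℝ) - 1) * (η ^ 2 * U ^ 2 / rmin ^ 2)))
            + η ^ 2 * U ^ 2 := by
        rw [add_mul, div_mul_cancel₀ _ hpos.ne']; ring
      rw [he]; exact hkey2
    have hCi : η ^ 2 * U ^ 2 / r i ^ 2 ≤ η ^ 2 * U ^ 2 / rmin ^ 2 := by
      apply div_le_div_of_nonneg_left (by positivity) (pow_pos hrminpos 2)
      nlinarith [hrminle i, hrminpos]
    have hdrop : (1 - 2 * η * ε) * (V t + ((B : ℝ) - 1) * (η ^ 2 * U ^ 2 / rmin ^ 2))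
        ≤ (1 - 2 * η * ε) * V t + ((B : ℝ) - 1) * (η ^ 2 * U ^ 2 / rmin ^ 2) := by
      have hc : (0:ℝ) ≤ ((B : ℝ) - 1) * (η ^ 2 * U ^ 2 / rmin ^ 2) :=
        mul_nonneg (by linarith) hC0
      have h2ηε0 : (0:ℝ) ≤ 2 * η * ε := by positivity
      nlinarith [mul_nonneg h2ηε0 hc]
    have hBC : ((B : ℝ) - 1) * (η ^ 2 * U ^ 2 / rmin ^ 2) + η ^ 2 * U ^ 2 / rmin ^ 2
        = η ^ 2 * (B : ℝ) * U ^ 2 / rmin ^ 2 := by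
      ring
    linarith
  refine Finset.sup'_le _ _ fun i _ => ?_
  have := hmain i
  rw [hVdef] at this
  simp only at this
  linarith
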